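/- Let R = k[x,y,z,w]/(Ax - By) where A, B ∈ k[x,y,z,w], and let J = (x,y) ⊂ R. Then there exists an R-module homomorphism φ: J → R with φ(x) = B and φ(y) = A, and it is the unique such homomorphism determined by these values. -/

import Mathlib

set_option synthInstance.maxHeartbeats 400000
set_option maxHeartbeats 800000

open MvPolynomial

lemma aux_prime_X0 (k : Type*) [Field k] : Prime (X 0 : MvPolynomial (Fin 4) k) := by
  rw [← MulEquiv.prime_iff (finSuccEquiv k 3).toMulEquiv]
  simpa [finSuccEquiv_X_zero] using Polynomial.prime_X (R := MvPolynomial (Fin 3) k)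

lemma aux_not_dvd (k : Type*) [Field k] :
    ¬ (X 0 : MvPolynomial (Fin 4) k) ∣ X 1 := by
  intro h
  have h2 : (finSuccEquiv k 3) (X 0) ∣ (finSuccEquiv k 3) (X 1) := map_dvd _ h
  rw [finSuccEquiv_X_zero, show (1 : Fin 4) = Fin.succ 0 from rfl, finSuccEquiv_X_succ,
    Polynomial.X_dvd_iff, Polynomial.coeff_C_zero] at h2
  exact X_ne_zero _ h2

lemma aux_key (k : Type*) [Field k] (A B r s t : MvPolynomial (Fin 4) k)
    (h : r * X 0 + s * X 1 = t * (A * X 0 - B * X 1)) :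
    ∃ c, r * B + s * A = c * (A * X 0 - B * X 1) := by
  have hX : Prime (X 0 : MvPolynomial (Fin 4) k) := aux_prime_X0 k
  have hdvd : (X 0 : MvPolynomial (Fin 4) k) ∣ (s + t * B) * X 1 := by
    refine ⟨t * A - r, ?_⟩
    linear_combination h
  obtain ⟨c, hc⟩ := (hX.dvd_mul.mp hdvd).resolve_right (aux_not_dvd k)
  have hr : r = t * A - c * X 1 := by
    have h0 : (r - (t * A - c * X 1)) * X 0 = 0 := by linear_combination h - X 1 * hc
    rcases mul_eq_zero.mp h0 with h1 | h1
    · exact sub_eq_zero.mp h1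
    · exact absurd h1 hX.ne_zero
  exact ⟨c, by linear_combination B * hr + A * hc⟩
lemma aux_factor {R M N : Type*} [CommRing R] [AddCommGroup M] [Module R M]
    [AddCommGroup N] [Module R N] (f g : M →ₗ[R] N)
    (h : LinearMap.ker g ≤ LinearMap.ker f) :
    ∃ φ : LinearMap.range g →ₗ[R] N,
      ∀ m : M, φ ⟨g m, LinearMap.mem_range_self g m⟩ = f m := by
  refine ⟨(Submodule.liftQ (LinearMap.ker g) f h).comp
      g.quotKerEquivRange.symm.toLinearMap, fun m => ?_⟩
  show Submodule.liftQ _ f h (g.quotKerEquivRange.symm ⟨g m, _⟩) = f m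
  rw [LinearMap.quotKerEquivRange_symm_apply_image]
  exact LinearMap.congr_fun (Submodule.liftQ_mkQ (p := LinearMap.ker g) f h) m

lemma aux_hom {R : Type*} [CommRing R] (I : Ideal R) (x y bx ay : R)
    (hx : x ∈ I) (hy : y ∈ I) (hspan : I = Ideal.span {x, y})
    (hcomp : ∀ r s : R, r * x + s * y = 0 → r * bx + s * ay = 0) :
    ∃! φ : I →ₗ[R] R, φ ⟨x, hx⟩ = bx ∧ φ ⟨y, hy⟩ = ay := by
  let g' : R × R →ₗ[R] R := x • LinearMap.fst R R R + y • LinearMap.snd R R R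
  let f' : R × R →ₗ[R] R := bx • LinearMap.fst R R R + ay • LinearMap.snd R R R
  have hg'app : ∀ u v : R, g' (u, v) = u * x + v * y := by
    intro u v; simp [g', smul_eq_mul]; ring
  have hf'app : ∀ u v : R, f' (u, v) = u * bx + v * ay := by
    intro u v; simp [f', smul_eq_mul]; ring
  have hker : LinearMap.ker g' ≤ LinearMap.ker f' := by
    rintro ⟨u, v⟩ hm
    rw [LinearMap.mem_ker, hg'app] at hm
    rw [LinearMap.mem_ker, hf'app]
    exact hcomp u v hm
  have hrange : LinearMap.range g' = (I : Submodule R R) := by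
    ext z
    rw [LinearMap.mem_range, hspan]
    constructor
    · rintro ⟨⟨u, v⟩, rfl⟩
      rw [hg'app]
      exact Submodule.mem_span_pair.mpr ⟨u, v, by rw [smul_eq_mul, smul_eq_mul]⟩
    · intro hz
      obtain ⟨a, b, hab⟩ := Submodule.mem_span_pair.mp hz
      exact ⟨(a, b), by rw [hg'app, ← hab, smul_eq_mul, smul_eq_mul]⟩
  obtain ⟨φ0, hφ0⟩ := aux_factor f' g' hker
  let eJ : (I : Submodule R R) ≃ₗ[R] LinearMap.range g' := LinearEquiv.ofEq _ _ hrange.symm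
  let φ : I →ₗ[R] R := φ0.comp eJ.toLinearMap
  have keyval : ∀ (z : R) (hz : z ∈ I) (u v : R)
      (huv : g' (u, v) = z), φ ⟨z, hz⟩ = f' (u, v) := by
    intro z hz u v huv
    have h1 : eJ ⟨z, hz⟩ = ⟨g' (u, v), LinearMap.mem_range_self _ _⟩ :=
      Subtype.ext (by simp [eJ, huv])
    show φ0 (eJ ⟨z, hz⟩) = _
    rw [h1]
    exact hφ0 (u, v)
  have hφx : φ ⟨x, hx⟩ = bx := by
    rw [keyval x hx 1 0 (by rw [hg'app]; ring), hf'app]; ring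
  have hφy : φ ⟨y, hy⟩ = ay := by
    rw [keyval y hy 0 1 (by rw [hg'app]; ring), hf'app]; ring
  refine ⟨φ, ⟨hφx, hφy⟩, ?_⟩
  rintro ψ ⟨hψx, hψy⟩
  apply LinearMap.ext
  rintro ⟨z, hz⟩
  have hz' := hz
  rw [hspan] at hz'
  obtain ⟨a, b, hab⟩ := Submodule.mem_span_pair.mp hz'
  have hdecomp : (⟨z, hz⟩ : I) = a • ⟨x, hx⟩ + b • ⟨y, hy⟩ :=
    Subtype.ext (by simpa using hab.symm)
  rw [hdecomp, map_add, map_add, map_smul, map_smul, map_smul, map_smul,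
    hψx, hψy, hφx, hφy]

/-- Let `R = k[x,y,z,w]/(Ax - By)` and `J = (x,y) ⊆ R`. There is a unique `R`-module
homomorphism `φ : J → R` with `φ(x) = B` and `φ(y) = A`. -/
theorem exists_unique_unprojection_hom (k : Type*) [Field k]
    (A B : MvPolynomial (Fin 4) k)
    (Q : Ideal (MvPolynomial (Fin 4) k))
    (hQ : Q = Ideal.span {A * X 0 - B * X 1})
    (J : Ideal (MvPolynomial (Fin 4) k ⧸ Q))
    (hJ : J = Ideal.span {Ideal.Quotient.mk Q (X 0), Ideal.Quotient.mk Q (X 1)}) :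
    ∃! φ : J →ₗ[MvPolynomial (Fin 4) k ⧸ Q] (MvPolynomial (Fin 4) k ⧸ Q),
      φ ⟨Ideal.Quotient.mk Q (X 0), by
          rw [hJ]; exact Ideal.subset_span (Set.mem_insert _ _)⟩
        = Ideal.Quotient.mk Q B ∧
      φ ⟨Ideal.Quotient.mk Q (X 1), by
          rw [hJ]; exact Ideal.subset_span (Set.mem_insert_of_mem _ rfl)⟩
        = Ideal.Quotient.mk Q A := by
  refine aux_hom J (Ideal.Quotient.mk Q (X 0)) (Ideal.Quotient.mk Q (X 1))
    (Ideal.Quotient.mk Q B) (Ideal.Quotient.mk Q A) _ _ hJ ?_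
  intro u v hm
  obtain ⟨r, rfl⟩ := Ideal.Quotient.mk_surjective u
  obtain ⟨s, rfl⟩ := Ideal.Quotient.mk_surjective v
  have hm' : r * X 0 + s * X 1 ∈ Q := by
    rw [← Ideal.Quotient.eq_zero_iff_mem, map_add, map_mul, map_mul]
    exact hm
  rw [hQ, Ideal.mem_span_singleton] at hm'
  obtain ⟨t, ht⟩ := hm'
  obtain ⟨c, hcb⟩ := aux_key k A B r s t (by linear_combination ht)
  have hmem : r * B + s * A ∈ Q := by
    rw [hQ, Ideal.mem_span_singleton]
    exact ⟨c, by linear_combination hcb⟩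
  rw [← map_mul, ← map_mul, ← map_add, Ideal.Quotient.eq_zero_iff_mem]
  exact hmem
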